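/- There exists a universal constant C > 0 such that the following holds. Let K ≥ 1 be an integer, (X, 𝒜) and (Y, ℬ) measurable spaces, ν a probability measure on X, and for each (x, a) ∈ X × Fin K a probability kernel giving the law of Y. Let μ be the law of (x, a, y) where x ∼ ν, a is uniform on Fin K, and y is drawn from the kernel at (x, a). Let H be a finite nonempty set of measurable functions from X × Y into the probability simplex Δ_K ⊆ ℝ^K containing h* with conditional expectation of e_A given (X, Y) under μ equal to h*(X, Y) almost surely. Let ĥ be any minimizer over H of the empirical loss Σ_{i=1}^N ‖h(x_i, y_i) − e_{a_i}‖₂² on N i.i.d. samples from μ. Then for every δ ∈ (0,1), with probability at least 1 − δ: Σ_{a=1}^K E_{x∼ν} E_{y | x, a}[ ( ĥ_a(x, y) − h*_a(x, y) )² ] ≤ C·K·log(|H|/δ)/N, where the inner expectation is over y drawn from the kernel at (x, a) with ĥ fixed. -/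

import Mathlib

open scoped BigOperators ProbabilityTheory ENNReal
open MeasureTheory ProbabilityTheory

lemma aux_exp_quad {x : ℝ} (hx : |x| ≤ 1) : Real.exp x ≤ 1 + x + x ^ 2 := by
  have h := Real.exp_bound hx (by norm_num : 0 < 2)
  have hs : ∑ m ∈ Finset.range 2, x ^ m / (Nat.factorial m) = 1 + x := by
    simp [Finset.sum_range_succ, Nat.factorial]
  rw [hs] at h
  have h2 := (abs_sub_le_iff.1 h).1
  have h3 : |x| ^ 2 = x ^ 2 := sq_abs x
  have h4 : ((Nat.succ 2 : ℕ) : ℝ) / ((Nat.factorial 2 : ℕ) * (2:ℕ)) = 3 / 4 := by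
    norm_num [Nat.factorial]
  rw [h4, h3] at h2
  nlinarith [sq_nonneg x]

lemma aux_int_bdd {Ω : Type*} [m : MeasurableSpace Ω] {μ : Measure Ω} [IsFiniteMeasure μ]
    {f : Ω → ℝ} (hf : AEStronglyMeasurable f μ) {c : ℝ} (hb : ∀ ω, |f ω| ≤ c) :
    Integrable f μ :=
  Integrable.mono' (integrable_const c) hf (ae_of_all _ (by simpa [Real.norm_eq_abs] using hb))

lemma aux_chernoff_step {Ω : Type*} [MeasurableSpace Ω] (μ : Measure Ω) [IsProbabilityMeasure μ]
    {Z : Ω → ℝ} (hZm : Measurable Z) (hZb : ∀ ω, |Z ω| ≤ 2)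
    (hvar : ∫ ω, (Z ω) ^ 2 ∂μ ≤ 8 * ∫ ω, Z ω ∂μ) :
    ∫ ω, Real.exp (-(Z ω) / 16) ∂μ ≤ Real.exp (-(∫ ω, Z ω ∂μ) / 32) := by
  have intZ : Integrable Z μ := aux_int_bdd hZm.aestronglyMeasurable hZb
  have intZ2 : Integrable (fun ω => (Z ω) ^ 2) μ :=
    aux_int_bdd (hZm.pow_const 2).aestronglyMeasurable
      (c := 4) (fun ω => by have := hZb ω; rw [abs_pow]; nlinarith [abs_nonneg (Z ω)])
  have intE : Integrable (fun ω => Real.exp (-(Z ω) / 16)) μ :=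
    aux_int_bdd (((hZm.neg.div_const 16).exp).aestronglyMeasurable)
      (c := Real.exp 1) (fun ω => by
        rw [abs_of_pos (Real.exp_pos _)]
        apply Real.exp_le_exp.2
        have := hZb ω
        cases abs_le.1 this with
        | intro h1 h2 => nlinarith)
  have hpt : ∀ ω, Real.exp (-(Z ω) / 16) ≤ 1 + (-(Z ω) / 16) + (Z ω) ^ 2 / 256 := by
    intro ω
    have hb : |(-(Z ω) / 16)| ≤ 1 := by
      rw [abs_div, abs_neg]
      have := hZb ω
      rw [abs_of_pos (by norm_num : (0:ℝ) < 16)]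
      linarith
    have := aux_exp_quad hb
    have h2 : (-(Z ω) / 16) ^ 2 = (Z ω) ^ 2 / 256 := by ring
    linarith [this, h2.le]
  have hint : ∫ ω, Real.exp (-(Z ω) / 16) ∂μ
      ≤ ∫ ω, (1 + (-(Z ω) / 16) + (Z ω) ^ 2 / 256) ∂μ := by
    refine integral_mono intE ?_ hpt
    exact (integrable_const 1).add ((intZ.neg.div_const 16)) |>.add (intZ2.div_const 256)
  have hval : ∫ ω, (1 + (-(Z ω) / 16) + (Z ω) ^ 2 / 256) ∂μ
      = 1 + (-(∫ ω, Z ω ∂μ) / 16) + (∫ ω, (Z ω) ^ 2 ∂μ) / 256 := by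
    have i1 : Integrable (fun ω => 1 + -Z ω / 16) μ := (integrable_const 1).add (intZ.neg.div_const 16)
    calc ∫ ω, (1 + -Z ω / 16 + Z ω ^ 2 / 256) ∂μ
        = (∫ ω, (1 + -Z ω / 16) ∂μ) + ∫ ω, Z ω ^ 2 / 256 ∂μ :=
          integral_add i1 (intZ2.div_const 256)
      _ = ((∫ _, (1:ℝ) ∂μ) + ∫ ω, -Z ω / 16 ∂μ) + ∫ ω, Z ω ^ 2 / 256 ∂μ := by
          congr 1
          exact integral_add (integrable_const 1) (intZ.neg.div_const 16)
      _ = 1 + (-∫ ω, Z ω ∂μ) / 16 + (∫ ω, Z ω ^ 2 ∂μ) / 256 := by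
          rw [integral_const, integral_div, integral_div, integral_neg]
          simp
  have hlast : 1 + (-(∫ ω, Z ω ∂μ) / 16) + (∫ ω, (Z ω) ^ 2 ∂μ) / 256
      ≤ 1 + (-(∫ ω, Z ω ∂μ) / 32) := by linarith
  calc ∫ ω, Real.exp (-(Z ω) / 16) ∂μ ≤ _ := hint
    _ = _ := hval
    _ ≤ 1 + (-(∫ ω, Z ω ∂μ) / 32) := hlast
    _ ≤ Real.exp (-(∫ ω, Z ω ∂μ) / 32) := by
        have := Real.add_one_le_exp (-(∫ ω, Z ω ∂μ) / 32); linarith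

lemma aux_chernoff_prod {Ω : Type*} [MeasurableSpace Ω] (μ : Measure Ω) [IsProbabilityMeasure μ]
    (N : ℕ) {Z : Ω → ℝ} (hZm : Measurable Z) (hZb : ∀ ω, |Z ω| ≤ 2) :
    Measure.pi (fun _ : Fin N => μ) {ω | ∑ i, Z (ω i) ≤ 0}
      ≤ ENNReal.ofReal ((∫ ω, Real.exp (-(Z ω) / 16) ∂μ) ^ N) := by
  letI : MeasureSpace Ω := ⟨μ⟩
  have hvol : (volume : Measure Ω) = μ := rfl
  set g : Ω → ℝ := fun ω => Real.exp (-(Z ω) / 16) with hg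
  have hgm : Measurable g := ((hZm.neg.div_const 16).exp)
  set f : (Fin N → Ω) → ℝ := fun ω => ∏ i, g (ω i) with hf
  have hfm : Measurable f := by
    apply Finset.measurable_prod
    intro i _
    exact hgm.comp (measurable_pi_apply i)
  have hfnn : ∀ ω, 0 ≤ f ω := fun ω => Finset.prod_nonneg fun i _ => (Real.exp_pos _).le
  have hprod : ∫ ω, f ω ∂(Measure.pi fun _ : Fin N => μ) = (∫ ω, g ω ∂μ) ^ N := by
    have : (Measure.pi fun _ : Fin N => μ) = (volume : Measure (Fin N → Ω)) := rfl
    rw [this]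
    rw [← this, hf]
    simpa using MeasureTheory.integral_fintype_prod_eq_pow (ι := Fin N) (μ := μ) g
  have hfexp : ∀ ω : Fin N → Ω, f ω = Real.exp (∑ i, -(Z (ω i)) / 16) := by
    intro ω
    rw [Real.exp_sum]
  have hfb : ∀ ω, |f ω| ≤ Real.exp ((N : ℝ) / 8) := by
    intro ω
    rw [hfexp ω, abs_of_pos (Real.exp_pos _)]
    apply Real.exp_le_exp.2
    calc ∑ i, -(Z (ω i)) / 16 ≤ ∑ _i : Fin N, (1 : ℝ) / 8 := by
          apply Finset.sum_le_sum
          intro i _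
          have := hZb (ω i)
          cases abs_le.1 this with
          | intro h1 h2 => linarith
      _ = (N : ℝ) / 8 := by simp; ring
  have hfint : Integrable f (Measure.pi fun _ : Fin N => μ) :=
    aux_int_bdd hfm.aestronglyMeasurable hfb
  have hsub : {ω : Fin N → Ω | ∑ i, Z (ω i) ≤ 0} ⊆ {ω | 1 ≤ f ω} := by
    intro ω hω
    rw [Set.mem_setOf_eq, hfexp ω]
    have h1 : (0 : ℝ) ≤ ∑ i, -(Z (ω i)) / 16 := by
      have heq : ∑ i, -(Z (ω i)) / 16 = -(∑ i, Z (ω i)) / 16 := by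
        rw [← Finset.sum_div, ← Finset.sum_neg_distrib]
      have h2 : ∑ i, Z (ω i) ≤ 0 := hω
      rw [heq]
      have h3 : (0:ℝ) ≤ -(∑ i, Z (ω i)) := neg_nonneg.2 h2
      linarith
    calc (1 : ℝ) = Real.exp 0 := Real.exp_zero.symm
      _ ≤ _ := Real.exp_le_exp.2 h1
  have hmarkov := mul_meas_ge_le_integral_of_nonneg (ae_of_all _ hfnn) hfint 1
  rw [one_mul] at hmarkov
  calc Measure.pi (fun _ : Fin N => μ) {ω | ∑ i, Z (ω i) ≤ 0}
      ≤ Measure.pi (fun _ : Fin N => μ) {ω | 1 ≤ f ω} := measure_mono hsub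
    _ ≤ ENNReal.ofReal (∫ ω, f ω ∂(Measure.pi fun _ : Fin N => μ)) := by
        rw [ENNReal.le_ofReal_iff_toReal_le (measure_ne_top _ _)
          (integral_nonneg hfnn)]
        exact hmarkov
    _ = _ := by rw [hprod]

lemma aux_crossterm {Ω : Type*} {m : MeasurableSpace Ω} [m0 : MeasurableSpace Ω] (hm : m ≤ m0)
    (μ : Measure Ω) [IsProbabilityMeasure μ]
    {f g gs : Ω → ℝ} (hf : StronglyMeasurable[m] f) (hfb : ∀ ω, |f ω| ≤ 2)
    (hg : Measurable g) (hgb : ∀ ω, |g ω| ≤ 1)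
    (hcond : (μ[g|m]) =ᵐ[μ] gs) :
    ∫ ω, f ω * g ω ∂μ = ∫ ω, f ω * gs ω ∂μ := by
  have hfm0 : @Measurable Ω ℝ m0 _ f := (hf.mono hm).measurable
  have intg : Integrable g μ := aux_int_bdd hg.aestronglyMeasurable hgb
  have intfg : Integrable (fun ω => f ω * g ω) μ :=
    aux_int_bdd (hfm0.mul hg).aestronglyMeasurable (c := 2)
      (fun ω => by
        rw [abs_mul]
        calc |f ω| * |g ω| ≤ 2 * 1 :=
              mul_le_mul (hfb ω) (hgb ω) (abs_nonneg _) (by norm_num)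
          _ = 2 := by norm_num)
  have h1 : (μ[fun ω => f ω * g ω|m]) =ᵐ[μ] fun ω => f ω * (μ[g|m]) ω :=
    condExp_mul_of_stronglyMeasurable_left hf intfg intg
  calc ∫ ω, f ω * g ω ∂μ = ∫ ω, (μ[fun ω => f ω * g ω|m]) ω ∂μ :=
        (integral_condExp hm (f := fun ω => f ω * g ω)).symm
    _ = ∫ ω, f ω * (μ[g|m]) ω ∂μ := integral_congr_ae h1
    _ = ∫ ω, f ω * gs ω ∂μ :=
        integral_congr_ae (hcond.mono fun ω hω => by simp only []; rw [hω])

lemma aux_count_prob {K : ℕ} (hK : 1 ≤ K) :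
    IsProbabilityMeasure (((K : ℝ≥0∞)⁻¹) • (Measure.count : Measure (Fin K))) := by
  constructor
  rw [Measure.smul_apply, Measure.count_univ, smul_eq_mul]
  simp only [ENat.card_eq_coe_fintype_card, Fintype.card_fin, ENat.toENNReal_coe]
  have hK0 : (K : ℝ≥0∞) ≠ 0 := Nat.cast_ne_zero.2 (by omega)
  exact ENNReal.inv_mul_cancel hK0 (ENNReal.natCast_ne_top K)

lemma aux_integral_unif {K : ℕ} (hK : 1 ≤ K) (g : Fin K → ℝ) :
    ∫ a, g a ∂(((K : ℝ≥0∞)⁻¹) • (Measure.count : Measure (Fin K)))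
      = (K : ℝ)⁻¹ * ∑ a, g a := by
  rw [integral_smul_measure]
  haveI : IsFiniteMeasure (Measure.count : Measure (Fin K)) := by
    constructor
    rw [Measure.count_univ]
    simp
  have hint : Integrable g (Measure.count : Measure (Fin K)) :=
    aux_int_bdd (measurable_of_finite g).aestronglyMeasurable
      (c := ∑ a, |g a|) (fun a => Finset.single_le_sum (fun i _ => abs_nonneg (g i))
        (Finset.mem_univ a))
  have h1 : ∫ a, g a ∂(Measure.count : Measure (Fin K)) = ∑ a, g a := by
    rw [integral_fintype hint]
    simp [Measure.count_singleton]
  rw [h1]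
  simp [ENNReal.toReal_inv]

lemma aux_integral_mu {K : ℕ} (hK : 1 ≤ K) {X Y : Type} [MeasurableSpace X] [MeasurableSpace Y]
    (ν : Measure X) [IsProbabilityMeasure ν] (κ : Kernel (X × Fin K) Y) [IsMarkovKernel κ]
    {F : (X × Fin K) × Y → ℝ} (hF : Measurable F) {c : ℝ} (hFb : ∀ z, |F z| ≤ c) :
    ∫ z, F z ∂((ν.prod (((K : ℝ≥0∞)⁻¹) • (Measure.count : Measure (Fin K)))) ⊗ₘ κ)
      = ∫ x, (K : ℝ)⁻¹ * ∑ a : Fin K, ∫ y, F ((x, a), y) ∂(κ (x, a)) ∂ν := by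
  haveI := aux_count_prob hK
  set η : Measure (Fin K) := ((K : ℝ≥0∞)⁻¹) • (Measure.count : Measure (Fin K)) with hη
  set P : Measure (X × Fin K) := ν.prod η with hP
  haveI : IsProbabilityMeasure P := by rw [hP]; infer_instance
  have hFint : Integrable F (P ⊗ₘ κ) := aux_int_bdd hF.aestronglyMeasurable hFb
  rw [Measure.integral_compProd hFint]
  set g : X × Fin K → ℝ := fun p => ∫ y, F (p, y) ∂(κ p) with hg
  have hgm : StronglyMeasurable g := hF.stronglyMeasurable.integral_kernel_prod_right'
  have hgb : ∀ p, |g p| ≤ |c| := by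
    intro p
    rw [← Real.norm_eq_abs]
    show ‖∫ y, F (p, y) ∂(κ p)‖ ≤ |c|
    calc ‖∫ y, F (p, y) ∂(κ p)‖ ≤ |c| * ((κ p) Set.univ).toReal := by
          apply norm_integral_le_of_norm_le_const
          filter_upwards with y
          rw [Real.norm_eq_abs]
          exact (hFb _).trans (le_abs_self c)
      _ = |c| := by simp
  have hgint : Integrable g P := aux_int_bdd hgm.aestronglyMeasurable hgb
  rw [hP, MeasureTheory.integral_prod g hgint]
  apply integral_congr_ae
  filter_upwards with x
  rw [aux_integral_unif hK]

section Main

variable {K : ℕ} {X Y : Type} [MeasurableSpace X] [MeasurableSpace Y]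

noncomputable def eVec (z : (X × Fin K) × Y) (k : Fin K) : ℝ := if z.1.2 = k then 1 else 0

noncomputable def lossL (h : X × Y → Fin K → ℝ) (z : (X × Fin K) × Y) : ℝ :=
  ∑ k, (h (z.1.1, z.2) k - eVec z k) ^ 2

noncomputable def ZZ (h g : X × Y → Fin K → ℝ) (z : (X × Fin K) × Y) : ℝ :=
  lossL h z - lossL g z

noncomputable def D2 (h g : X × Y → Fin K → ℝ) (z : (X × Fin K) × Y) : ℝ :=
  ∑ k, (h (z.1.1, z.2) k - g (z.1.1, z.2) k) ^ 2

lemma simplex01 {h : X × Y → Fin K → ℝ} (hs : ∀ p, h p ∈ stdSimplex ℝ (Fin K))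
    (p : X × Y) (k : Fin K) : 0 ≤ h p k ∧ h p k ≤ 1 := by
  obtain ⟨h0, h1⟩ := hs p
  refine ⟨h0 k, ?_⟩
  calc h p k ≤ ∑ j, h p j := Finset.single_le_sum (fun j _ => h0 j) (Finset.mem_univ k)
    _ = 1 := h1

lemma eVec01 (z : (X × Fin K) × Y) (k : Fin K) : eVec z k = 0 ∨ eVec z k = 1 := by
  unfold eVec; split <;> simp

lemma eVec_sum (z : (X × Fin K) × Y) : ∑ j, eVec z j = 1 := by
  unfold eVec
  rw [Finset.sum_ite_eq (Finset.univ : Finset (Fin K)) z.1.2 (fun _ => (1:ℝ))]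
  simp

lemma lossL_bounds {h : X × Y → Fin K → ℝ} (hs : ∀ p, h p ∈ stdSimplex ℝ (Fin K))
    (z : (X × Fin K) × Y) : 0 ≤ lossL h z ∧ lossL h z ≤ 2 := by
  constructor
  · exact Finset.sum_nonneg fun k _ => sq_nonneg _
  · have hpt : ∀ k, (h (z.1.1, z.2) k - eVec z k) ^ 2 ≤ h (z.1.1, z.2) k + eVec z k := by
      intro k
      obtain ⟨h0, h1⟩ := simplex01 hs (z.1.1, z.2) k
      rcases eVec01 z k with he | he <;> rw [he] <;> nlinarith
    calc lossL h z ≤ ∑ k, (h (z.1.1, z.2) k + eVec z k) := Finset.sum_le_sum fun k _ => hpt k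
      _ = (∑ k, h (z.1.1, z.2) k) + ∑ k, eVec z k := Finset.sum_add_distrib
      _ = 1 + 1 := by rw [(hs (z.1.1, z.2)).2, eVec_sum z]
      _ = 2 := by norm_num

lemma ZZ_abs_le {h g : X × Y → Fin K → ℝ} (hs : ∀ p, h p ∈ stdSimplex ℝ (Fin K))
    (gs : ∀ p, g p ∈ stdSimplex ℝ (Fin K)) (z : (X × Fin K) × Y) : |ZZ h g z| ≤ 2 := by
  obtain ⟨a1, a2⟩ := lossL_bounds hs z
  obtain ⟨b1, b2⟩ := lossL_bounds gs z
  rw [ZZ, abs_le]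
  constructor <;> linarith

lemma ZZ_eq (h g : X × Y → Fin K → ℝ) (z : (X × Fin K) × Y) :
    ZZ h g z = D2 h g z
      + 2 * ∑ k, (h (z.1.1, z.2) k - g (z.1.1, z.2) k) * (g (z.1.1, z.2) k - eVec z k) := by
  rw [ZZ, lossL, lossL, D2, Finset.mul_sum, ← Finset.sum_sub_distrib, ← Finset.sum_add_distrib]
  apply Finset.sum_congr rfl
  intro k _
  ring

lemma ZZ_sq_le {h g : X × Y → Fin K → ℝ} (hs : ∀ p, h p ∈ stdSimplex ℝ (Fin K))
    (gs : ∀ p, g p ∈ stdSimplex ℝ (Fin K)) (z : (X × Fin K) × Y) :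
    (ZZ h g z) ^ 2 ≤ 8 * D2 h g z := by
  set p := (z.1.1, z.2)
  have hZ : ZZ h g z = ∑ k, (h p k - g p k) * (h p k + g p k - 2 * eVec z k) := by
    rw [ZZ, lossL, lossL, ← Finset.sum_sub_distrib]
    apply Finset.sum_congr rfl
    intro k _
    ring
  have hcs := Finset.sum_mul_sq_le_sq_mul_sq Finset.univ
    (fun k => h p k - g p k) (fun k => h p k + g p k - 2 * eVec z k)
  have hc8 : ∑ k, (h p k + g p k - 2 * eVec z k) ^ 2 ≤ 8 := by
    have hpt : ∀ k, (h p k + g p k - 2 * eVec z k) ^ 2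
        ≤ 2 * (h p k + g p k) + 4 * eVec z k := by
      intro k
      obtain ⟨h0, h1⟩ := simplex01 hs p k
      obtain ⟨g0, g1⟩ := simplex01 gs p k
      rcases eVec01 z k with he | he <;> rw [he] <;> nlinarith
    calc ∑ k, (h p k + g p k - 2 * eVec z k) ^ 2
        ≤ ∑ k, (2 * (h p k + g p k) + 4 * eVec z k) := Finset.sum_le_sum fun k _ => hpt k
      _ = 2 * ((∑ k, h p k) + ∑ k, g p k) + 4 * ∑ k, eVec z k := by
          rw [Finset.sum_add_distrib, ← Finset.mul_sum, ← Finset.mul_sum, Finset.sum_add_distrib]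
      _ ≤ 8 := by
          rw [(hs p).2, (gs p).2, eVec_sum z]
          norm_num
  have hD2 : D2 h g z = ∑ k, (h p k - g p k) ^ 2 := rfl
  calc (ZZ h g z) ^ 2 = (∑ k, (h p k - g p k) * (h p k + g p k - 2 * eVec z k)) ^ 2 := by
        rw [hZ]
    _ ≤ (∑ k, (h p k - g p k) ^ 2) * ∑ k, (h p k + g p k - 2 * eVec z k) ^ 2 := hcs
    _ ≤ (∑ k, (h p k - g p k) ^ 2) * 8 := by
        apply mul_le_mul_of_nonneg_left hc8 (Finset.sum_nonneg fun k _ => sq_nonneg _)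
    _ = 8 * D2 h g z := by rw [hD2]; ring

lemma eVec_meas (k : Fin K) : Measurable (fun z : (X × Fin K) × Y => eVec z k) := by
  unfold eVec
  exact Measurable.ite ((measurable_snd.comp measurable_fst) (measurableSet_singleton k))
    measurable_const measurable_const

lemma proj_meas : Measurable (fun z : (X × Fin K) × Y => (z.1.1, z.2)) :=
  (measurable_fst.comp measurable_fst).prodMk measurable_snd

lemma coord_meas {h : X × Y → Fin K → ℝ} (hm : Measurable h) (k : Fin K) :
    Measurable (fun p : X × Y => h p k) := (measurable_pi_apply k).comp hm

lemma lossL_meas {h : X × Y → Fin K → ℝ} (hm : Measurable h) : Measurable (lossL h) := by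
  unfold lossL
  apply Finset.measurable_sum
  intro k _
  exact (((coord_meas hm k).comp proj_meas).sub (eVec_meas k)).pow_const 2

lemma ZZ_meas {h g : X × Y → Fin K → ℝ} (hm : Measurable h) (gm : Measurable g) :
    Measurable (ZZ h g) := (lossL_meas hm).sub (lossL_meas gm)

lemma D2_meas {h g : X × Y → Fin K → ℝ} (hm : Measurable h) (gm : Measurable g) :
    Measurable (D2 h g) := by
  unfold D2
  apply Finset.measurable_sum
  intro k _
  exact ((((coord_meas hm k).comp proj_meas)).sub ((coord_meas gm k).comp proj_meas)).pow_const 2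

lemma D2_bounds {h g : X × Y → Fin K → ℝ} (hs : ∀ p, h p ∈ stdSimplex ℝ (Fin K))
    (gs : ∀ p, g p ∈ stdSimplex ℝ (Fin K)) (z : (X × Fin K) × Y) :
    0 ≤ D2 h g z ∧ D2 h g z ≤ K := by
  constructor
  · exact Finset.sum_nonneg fun k _ => sq_nonneg _
  · have hpt : ∀ k : Fin K, (h (z.1.1, z.2) k - g (z.1.1, z.2) k) ^ 2 ≤ 1 := by
      intro k
      obtain ⟨h0, h1⟩ := simplex01 hs (z.1.1, z.2) k
      obtain ⟨g0, g1⟩ := simplex01 gs (z.1.1, z.2) k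
      nlinarith
    calc D2 h g z ≤ ∑ _k : Fin K, (1:ℝ) := Finset.sum_le_sum fun k _ => hpt k
      _ = K := by simp

/-- The conditional-mean identity: `∫ ZZ = ∫ D2`. -/
lemma EZ_eq_D2 (μ : Measure ((X × Fin K) × Y)) [IsProbabilityMeasure μ]
    {h g : X × Y → Fin K → ℝ} (hm : Measurable h) (gm : Measurable g)
    (hs : ∀ p, h p ∈ stdSimplex ℝ (Fin K)) (gs : ∀ p, g p ∈ stdSimplex ℝ (Fin K))
    (hcond : ∀ k : Fin K,
      (μ[(fun z : (X × Fin K) × Y => if z.1.2 = k then (1 : ℝ) else 0) |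
          MeasurableSpace.comap (fun z : (X × Fin K) × Y => (z.1.1, z.2)) inferInstance])
        =ᵐ[μ] fun z => g (z.1.1, z.2) k) :
    ∫ z, ZZ h g z ∂μ = ∫ z, D2 h g z ∂μ := by
  have hmle : MeasurableSpace.comap (fun z : (X × Fin K) × Y => (z.1.1, z.2)) inferInstance
      ≤ (inferInstance : MeasurableSpace ((X × Fin K) × Y)) := proj_meas.comap_le
  have hπm : Measurable[MeasurableSpace.comap
        (fun z : (X × Fin K) × Y => (z.1.1, z.2)) inferInstance]
      (fun z : (X × Fin K) × Y => (z.1.1, z.2)) :=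
    measurable_iff_comap_le.2 le_rfl
  -- the cross terms vanish
  have hcross : ∀ k : Fin K,
      ∫ z, (h (z.1.1, z.2) k - g (z.1.1, z.2) k) * (g (z.1.1, z.2) k - eVec z k) ∂μ = 0 := by
    intro k
    set f : (X × Fin K) × Y → ℝ := fun z => h (z.1.1, z.2) k - g (z.1.1, z.2) k with hfdef
    have hfm : StronglyMeasurable[MeasurableSpace.comap
        (fun z : (X × Fin K) × Y => (z.1.1, z.2)) inferInstance] f :=
      Measurable.stronglyMeasurable (((coord_meas hm k).sub (coord_meas gm k)).comp hπm)
    have hfb : ∀ z, |f z| ≤ 2 := by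
      intro z
      obtain ⟨h0, h1⟩ := simplex01 hs (z.1.1, z.2) k
      obtain ⟨g0, g1⟩ := simplex01 gs (z.1.1, z.2) k
      rw [hfdef, abs_le]
      constructor <;> simp <;> nlinarith
    have hEm : Measurable (fun z : (X × Fin K) × Y => eVec z k) := eVec_meas k
    have hEb : ∀ z : (X × Fin K) × Y, |eVec z k| ≤ 1 := by
      intro z
      rcases eVec01 z k with he | he <;> rw [he] <;> norm_num
    have h1 : ∫ z, f z * eVec z k ∂μ = ∫ z, f z * (g (z.1.1, z.2) k) ∂μ := by
      apply aux_crossterm hmle μ hfm hfb hEm hEb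
      exact hcond k
    have h2 : ∀ z, f z * (g (z.1.1, z.2) k - eVec z k)
        = f z * (g (z.1.1, z.2) k) - f z * eVec z k := fun z => by ring
    have hintg : Integrable (fun z => f z * (g (z.1.1, z.2) k)) μ := by
      apply aux_int_bdd (((((coord_meas hm k).sub (coord_meas gm k)).comp
        proj_meas).mul ((coord_meas gm k).comp proj_meas)).aestronglyMeasurable) (c := 2)
      intro z
      rw [Pi.mul_apply, abs_mul]
      obtain ⟨g0, g1⟩ := simplex01 gs (z.1.1, z.2) k
      have := hfb z
      have hga : |g (z.1.1, z.2) k| ≤ 1 := abs_le.2 ⟨by linarith, g1⟩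
      calc |f z| * |g (z.1.1, z.2) k| ≤ 2 * 1 :=
            mul_le_mul this hga (abs_nonneg _) (by norm_num)
        _ = 2 := by norm_num
    have hinte : Integrable (fun z => f z * eVec z k) μ := by
      apply aux_int_bdd (((((coord_meas hm k).sub (coord_meas gm k)).comp
        proj_meas).mul hEm).aestronglyMeasurable) (c := 2)
      intro z
      rw [Pi.mul_apply, abs_mul]
      calc |f z| * |eVec z k| ≤ 2 * 1 :=
            mul_le_mul (hfb z) (hEb z) (abs_nonneg _) (by norm_num)
        _ = 2 := by norm_num
    calc ∫ z, f z * (g (z.1.1, z.2) k - eVec z k) ∂μ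
        = ∫ z, (f z * (g (z.1.1, z.2) k) - f z * eVec z k) ∂μ := by
          apply integral_congr_ae
          filter_upwards with z
          exact h2 z
      _ = (∫ z, f z * (g (z.1.1, z.2) k) ∂μ) - ∫ z, f z * eVec z k ∂μ :=
          integral_sub hintg hinte
      _ = 0 := by rw [h1]; ring
  -- integrability of pieces
  have hintD2 : Integrable (D2 h g) μ :=
    aux_int_bdd (D2_meas hm gm).aestronglyMeasurable (c := K)
      (fun z => by
        obtain ⟨d0, d1⟩ := D2_bounds hs gs z
        rw [abs_of_nonneg d0]; exact d1)
  have hintcross : ∀ k : Fin K, Integrable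
      (fun z : (X × Fin K) × Y =>
        (h (z.1.1, z.2) k - g (z.1.1, z.2) k) * (g (z.1.1, z.2) k - eVec z k)) μ := by
    intro k
    apply aux_int_bdd (Measurable.aestronglyMeasurable ?_) (c := 4)
    · intro z
      rw [abs_mul]
      obtain ⟨h0, h1⟩ := simplex01 hs (z.1.1, z.2) k
      obtain ⟨g0, g1⟩ := simplex01 gs (z.1.1, z.2) k
      have e1 : |h (z.1.1, z.2) k - g (z.1.1, z.2) k| ≤ 2 := abs_le.2 ⟨by linarith, by linarith⟩
      have e2 : |g (z.1.1, z.2) k - eVec z k| ≤ 2 := by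
        rcases eVec01 z k with he | he <;> rw [he] <;> rw [abs_le] <;>
          constructor <;> nlinarith
      calc |h (z.1.1, z.2) k - g (z.1.1, z.2) k| * |g (z.1.1, z.2) k - eVec z k| ≤ 2 * 2 :=
            mul_le_mul e1 e2 (abs_nonneg _) (by norm_num)
        _ = 4 := by norm_num
    · exact (((coord_meas hm k).sub (coord_meas gm k)).comp proj_meas).mul
        (((coord_meas gm k).comp proj_meas).sub (eVec_meas k))
  calc ∫ z, ZZ h g z ∂μ
      = ∫ z, (D2 h g z + 2 * ∑ k, (h (z.1.1, z.2) k - g (z.1.1, z.2) k)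
          * (g (z.1.1, z.2) k - eVec z k)) ∂μ := by
        apply integral_congr_ae
        filter_upwards with z
        exact ZZ_eq h g z
    _ = (∫ z, D2 h g z ∂μ) + 2 * ∫ z, (∑ k, (h (z.1.1, z.2) k - g (z.1.1, z.2) k)
          * (g (z.1.1, z.2) k - eVec z k)) ∂μ := by
        rw [integral_add hintD2 ((integrable_finset_sum _ (fun k _ => hintcross k)).const_mul 2),
          integral_const_mul]
    _ = ∫ z, D2 h g z ∂μ := by
        rw [integral_finset_sum _ (fun k _ => hintcross k)]
        rw [Finset.sum_congr rfl (fun k _ => hcross k)]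
        simp

lemma per_h_chernoff (μ : Measure ((X × Fin K) × Y)) [IsProbabilityMeasure μ] (N : ℕ)
    {h g : X × Y → Fin K → ℝ} (hm : Measurable h) (gm : Measurable g)
    (hs : ∀ p, h p ∈ stdSimplex ℝ (Fin K)) (gs : ∀ p, g p ∈ stdSimplex ℝ (Fin K))
    (hcond : ∀ k : Fin K,
      (μ[(fun z : (X × Fin K) × Y => if z.1.2 = k then (1 : ℝ) else 0) |
          MeasurableSpace.comap (fun z : (X × Fin K) × Y => (z.1.1, z.2)) inferInstance])
        =ᵐ[μ] fun z => g (z.1.1, z.2) k) :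
    Measure.pi (fun _ : Fin N => μ) {ω | ∑ i, ZZ h g (ω i) ≤ 0}
      ≤ ENNReal.ofReal (Real.exp (-((N : ℝ) * (∫ z, ZZ h g z ∂μ)) / 32)) := by
  have hZm : Measurable (ZZ h g) := ZZ_meas hm gm
  have hZb : ∀ z, |ZZ h g z| ≤ 2 := fun z => ZZ_abs_le hs gs z
  have hEZD : ∫ z, ZZ h g z ∂μ = ∫ z, D2 h g z ∂μ := EZ_eq_D2 μ hm gm hs gs hcond
  have hintD2 : Integrable (D2 h g) μ :=
    aux_int_bdd (D2_meas hm gm).aestronglyMeasurable (c := K)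
      (fun z => by
        obtain ⟨d0, d1⟩ := D2_bounds hs gs z
        rw [abs_of_nonneg d0]; exact d1)
  have hintZ2 : Integrable (fun z => (ZZ h g z) ^ 2) μ :=
    aux_int_bdd (hZm.pow_const 2).aestronglyMeasurable (c := 4)
      (fun z => by
        rw [abs_pow]
        have := hZb z
        nlinarith [abs_nonneg (ZZ h g z)])
  have hvar : ∫ z, (ZZ h g z) ^ 2 ∂μ ≤ 8 * ∫ z, ZZ h g z ∂μ := by
    rw [hEZD]
    calc ∫ z, (ZZ h g z) ^ 2 ∂μ ≤ ∫ z, 8 * D2 h g z ∂μ := by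
          apply integral_mono hintZ2 (hintD2.const_mul 8)
          intro z
          exact ZZ_sq_le hs gs z
      _ = 8 * ∫ z, D2 h g z ∂μ := integral_const_mul 8 _
  have hstep := aux_chernoff_step μ hZm hZb hvar
  have hEint : 0 ≤ ∫ z, Real.exp (-(ZZ h g z) / 16) ∂μ :=
    integral_nonneg fun z => (Real.exp_pos _).le
  calc Measure.pi (fun _ : Fin N => μ) {ω | ∑ i, ZZ h g (ω i) ≤ 0}
      ≤ ENNReal.ofReal ((∫ z, Real.exp (-(ZZ h g z) / 16) ∂μ) ^ N) :=
        aux_chernoff_prod μ N hZm hZb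
    _ ≤ ENNReal.ofReal (Real.exp (-(∫ z, ZZ h g z ∂μ) / 32) ^ N) := by
        apply ENNReal.ofReal_le_ofReal
        exact pow_le_pow_left₀ hEint hstep N
    _ = ENNReal.ofReal (Real.exp (-((N : ℝ) * (∫ z, ZZ h g z ∂μ)) / 32)) := by
        rw [← Real.exp_nat_mul]
        congr 1
        ring

lemma sum_int_le (hK : 1 ≤ K) (ν : Measure X) [IsProbabilityMeasure ν]
    (κ : Kernel (X × Fin K) Y) [IsMarkovKernel κ]
    {h g : X × Y → Fin K → ℝ} (hm : Measurable h) (gm : Measurable g)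
    (hs : ∀ p, h p ∈ stdSimplex ℝ (Fin K)) (gs : ∀ p, g p ∈ stdSimplex ℝ (Fin K)) :
    ∑ a : Fin K, ∫ x, (∫ y, (h (x, y) a - g (x, y) a) ^ 2 ∂(κ (x, a))) ∂ν
      ≤ (K : ℝ) * ∫ z, D2 h g z
          ∂((ν.prod (((K : ℝ≥0∞)⁻¹) • (Measure.count : Measure (Fin K)))) ⊗ₘ κ) := by
  have hKR : (0 : ℝ) < K := by exact_mod_cast Nat.pos_of_ne_zero (by omega)
  have hD2m : Measurable (D2 h g) := D2_meas hm gm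
  have hD2b : ∀ z, |D2 h g z| ≤ (K : ℝ) := fun z => by
    obtain ⟨d0, d1⟩ := D2_bounds hs gs z
    rw [abs_of_nonneg d0]; exact d1
  have hmu := aux_integral_mu hK ν κ hD2m hD2b
  -- strongly measurable kernel integral
  have hIm : StronglyMeasurable (fun p : X × Fin K => ∫ y, D2 h g (p, y) ∂(κ p)) :=
    hD2m.stronglyMeasurable.integral_kernel_prod_right'
  have hIb : ∀ p : X × Fin K, |∫ y, D2 h g (p, y) ∂(κ p)| ≤ (K : ℝ) := by
    intro p
    rw [← Real.norm_eq_abs]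
    calc ‖∫ y, D2 h g (p, y) ∂(κ p)‖ ≤ (K : ℝ) * ((κ p) Set.univ).toReal := by
          apply norm_integral_le_of_norm_le_const
          filter_upwards with y
          rw [Real.norm_eq_abs]
          exact hD2b _
      _ = (K : ℝ) := by simp
  have hIint : ∀ a : Fin K, Integrable (fun x => ∫ y, D2 h g ((x, a), y) ∂(κ (x, a))) ν := by
    intro a
    exact aux_int_bdd (hIm.comp_measurable (measurable_id.prodMk measurable_const)
      ).aestronglyMeasurable (fun x => hIb (x, a))
  -- the single-coordinate integrand
  have hFam : ∀ a : Fin K, Measurable (fun z : (X × Fin K) × Y =>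
      (h (z.1.1, z.2) a - g (z.1.1, z.2) a) ^ 2) := fun a =>
    ((((coord_meas hm a).comp proj_meas)).sub ((coord_meas gm a).comp proj_meas)).pow_const 2
  have hJm : ∀ a : Fin K, StronglyMeasurable (fun p : X × Fin K =>
      ∫ y, (h (p.1, y) a - g (p.1, y) a) ^ 2 ∂(κ p)) := by
    intro a
    exact (hFam a).stronglyMeasurable.integral_kernel_prod_right'
  have hJb : ∀ (a : Fin K) (p : X × Fin K), |∫ y, (h (p.1, y) a - g (p.1, y) a) ^ 2 ∂(κ p)| ≤ 1 := by
    intro a p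
    rw [← Real.norm_eq_abs]
    calc ‖∫ y, (h (p.1, y) a - g (p.1, y) a) ^ 2 ∂(κ p)‖ ≤ 1 * ((κ p) Set.univ).toReal := by
          apply norm_integral_le_of_norm_le_const
          filter_upwards with y
          rw [Real.norm_eq_abs, abs_of_nonneg (sq_nonneg _)]
          obtain ⟨h0, h1⟩ := simplex01 hs (p.1, y) a
          obtain ⟨g0, g1⟩ := simplex01 gs (p.1, y) a
          nlinarith
      _ = 1 := by simp
  have hJint : ∀ a : Fin K, Integrable (fun x => ∫ y, (h (x, y) a - g (x, y) a) ^ 2 ∂(κ (x, a))) ν := by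
    intro a
    exact aux_int_bdd ((hJm a).comp_measurable
      (measurable_id.prodMk measurable_const)).aestronglyMeasurable
      (c := 1) (fun x => hJb a (x, a))
  -- pointwise comparison J ≤ I
  have hJI : ∀ (a : Fin K) (x : X),
      ∫ y, (h (x, y) a - g (x, y) a) ^ 2 ∂(κ (x, a)) ≤ ∫ y, D2 h g ((x, a), y) ∂(κ (x, a)) := by
    intro a x
    apply integral_mono
    · exact aux_int_bdd (Measurable.aestronglyMeasurable
        (((hFam a).comp (measurable_prodMk_left (x := (x, a))))))
        (c := 1) (fun y => by
          rw [abs_of_nonneg (sq_nonneg _)]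
          obtain ⟨h0, h1⟩ := simplex01 hs (x, y) a
          obtain ⟨g0, g1⟩ := simplex01 gs (x, y) a
          nlinarith)
    · exact aux_int_bdd (Measurable.aestronglyMeasurable
        (hD2m.comp (measurable_prodMk_left (x := (x, a)))))
        (c := K) (fun y => hD2b _)
    · intro y
      show (h (x, y) a - g (x, y) a) ^ 2 ≤ D2 h g ((x, a), y)
      unfold D2
      exact Finset.single_le_sum (f := fun k => (h (x, y) k - g (x, y) k) ^ 2)
        (fun k _ => sq_nonneg _) (Finset.mem_univ a)
  calc ∑ a : Fin K, ∫ x, (∫ y, (h (x, y) a - g (x, y) a) ^ 2 ∂(κ (x, a))) ∂ν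
      ≤ ∑ a : Fin K, ∫ x, (∫ y, D2 h g ((x, a), y) ∂(κ (x, a))) ∂ν := by
        apply Finset.sum_le_sum
        intro a _
        exact integral_mono (hJint a) (hIint a) (fun x => hJI a x)
    _ = ∫ x, ∑ a : Fin K, (∫ y, D2 h g ((x, a), y) ∂(κ (x, a))) ∂ν :=
        (integral_finset_sum _ (fun a _ => hIint a)).symm
    _ = (K : ℝ) * ∫ x, (K : ℝ)⁻¹ * ∑ a : Fin K, (∫ y, D2 h g ((x, a), y) ∂(κ (x, a))) ∂ν := by
        rw [integral_const_mul]
        rw [← mul_assoc, mul_inv_cancel₀ hKR.ne', one_mul]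
    _ = (K : ℝ) * ∫ z, D2 h g z
          ∂((ν.prod (((K : ℝ≥0∞)⁻¹) • (Measure.count : Measure (Fin K)))) ⊗ₘ κ) := by
        rw [hmu]

end Main
/-- **Eq. (22) (eq:gen_on) in the proof of Theorem 2.** Data are collected with the uniform
policy: `μ` is the law of `((x, a), y)` with `x ∼ ν`, `a` uniform on `Fin K`, and `y` drawn
from the kernel `κ` at `(x, a)`. The per-action generalization error of the ERM
inverse-kinematics estimator, summed over all `K` actions, is `O(K log(|H|/δ)/N)` with
probability `1 − δ`. -/
theorem stmt_16 : ∃ C : ℝ, 0 < C ∧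
    ∀ (K : ℕ), 1 ≤ K →
    ∀ (X Y : Type) (_ : MeasurableSpace X) (_ : MeasurableSpace Y)
      (ν : Measure X), IsProbabilityMeasure ν →
    ∀ (κ : Kernel (X × Fin K) Y), IsMarkovKernel κ →
    ∀ (μ : Measure ((X × Fin K) × Y)),
      μ = (ν.prod (((K : ℝ≥0∞)⁻¹) • (Measure.count : Measure (Fin K)))) ⊗ₘ κ →
    ∀ (H : Set (X × Y → Fin K → ℝ)), H.Finite → H.Nonempty →
      (∀ h ∈ H, Measurable h ∧ ∀ p, h p ∈ stdSimplex ℝ (Fin K)) →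
    ∀ hstar ∈ H,
      (∀ k : Fin K,
        (μ[(fun z : (X × Fin K) × Y => if z.1.2 = k then (1 : ℝ) else 0) |
            MeasurableSpace.comap (fun z : (X × Fin K) × Y => (z.1.1, z.2)) inferInstance])
          =ᵐ[μ] fun z => hstar (z.1.1, z.2) k) →
    ∀ (N : ℕ), 1 ≤ N →
    ∀ (hhat : (Fin N → (X × Fin K) × Y) → X × Y → Fin K → ℝ),
      (∀ ω, hhat ω ∈ H ∧ ∀ h ∈ H,
        (∑ i : Fin N, ∑ k : Fin K,
            (hhat ω ((ω i).1.1, (ω i).2) k - if (ω i).1.2 = k then (1 : ℝ) else 0) ^ 2) ≤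
          ∑ i : Fin N, ∑ k : Fin K,
            (h ((ω i).1.1, (ω i).2) k - if (ω i).1.2 = k then (1 : ℝ) else 0) ^ 2) →
    ∀ δ : ℝ, 0 < δ → δ < 1 →
      ENNReal.ofReal (1 - δ) ≤
        Measure.pi (fun _ : Fin N => μ)
          {ω | (∑ a : Fin K, ∫ x, (∫ y, (hhat ω (x, y) a - hstar (x, y) a) ^ 2 ∂(κ (x, a))) ∂ν) ≤
            C * K * Real.log (H.ncard / δ) / N} := by
  refine ⟨32, by norm_num, ?_⟩
  intro K hK X Y mX mY ν hν κ hκ μ hμEq H Hfin Hne Hprop hstar hstarH hcond N hN hhat hERM δ hδ0 hδ1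
  haveI := hν
  haveI := hκ
  haveI := aux_count_prob hK
  subst hμEq
  set μ : Measure ((X × Fin K) × Y) :=
    (ν.prod (((K : ℝ≥0∞)⁻¹) • (Measure.count : Measure (Fin K)))) ⊗ₘ κ with hμdef
  haveI hμP : IsProbabilityMeasure μ := by rw [hμdef]; infer_instance
  obtain ⟨hsm, hss⟩ := Hprop hstar hstarH
  -- numeric setup
  have hnc : 0 < H.ncard := (Set.ncard_pos Hfin).2 Hne
  have hncR : (0 : ℝ) < H.ncard := by exact_mod_cast hnc
  have hNR : (0 : ℝ) < N := by exact_mod_cast Nat.pos_of_ne_zero (by omega)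
  set r : ℝ := (H.ncard : ℝ) / δ with hrdef
  have hrpos : 0 < r := div_pos hncR hδ0
  set τ : ℝ := 32 * Real.log r / N with hτdef
  -- the bad event
  set S : (X × Y → Fin K → ℝ) → Set (Fin N → (X × Fin K) × Y) :=
    fun h => {ω | ∑ i, ZZ h hstar (ω i) ≤ 0} with hSdef
  set Fb : Finset (X × Y → Fin K → ℝ) :=
    Hfin.toFinset.filter (fun h => τ < ∫ z, ZZ h hstar z ∂μ) with hFbdef
  have hFbH : ∀ h ∈ Fb, h ∈ H := by
    intro h hh
    have := Finset.mem_filter.1 hh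
    exact Hfin.mem_toFinset.1 this.1
  have hSmeas : ∀ h ∈ Fb, MeasurableSet (S h) := by
    intro h hh
    have hm := (Hprop h (hFbH h hh)).1
    have : Measurable (fun ω : Fin N → (X × Fin K) × Y => ∑ i, ZZ h hstar (ω i)) := by
      apply Finset.measurable_sum
      intro i _
      exact (ZZ_meas hm hsm).comp (measurable_pi_apply i)
    exact this measurableSet_Iic
  -- per-h bound
  have hperh : ∀ h ∈ Fb, Measure.pi (fun _ : Fin N => μ) (S h)
      ≤ ENNReal.ofReal (δ / H.ncard) := by
    intro h hh
    obtain ⟨hm, hs⟩ := Hprop h (hFbH h hh)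
    have hEZ : τ < ∫ z, ZZ h hstar z ∂μ := (Finset.mem_filter.1 hh).2
    have hcher := per_h_chernoff μ N hm hsm hs hss hcond
    refine hcher.trans ?_
    apply ENNReal.ofReal_le_ofReal
    have hmono : -((N : ℝ) * (∫ z, ZZ h hstar z ∂μ)) / 32 ≤ -((N : ℝ) * τ) / 32 := by
      have := mul_le_mul_of_nonneg_left hEZ.le (le_of_lt hNR)
      linarith
    calc Real.exp (-((N : ℝ) * (∫ z, ZZ h hstar z ∂μ)) / 32)
        ≤ Real.exp (-((N : ℝ) * τ) / 32) := Real.exp_le_exp.2 hmono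
      _ = Real.exp (-Real.log r) := by
          congr 1
          rw [hτdef]
          field_simp
      _ = r⁻¹ := by rw [Real.exp_neg, Real.exp_log hrpos]
      _ = δ / H.ncard := by
          rw [hrdef]
          field_simp
  -- union bound
  have hcard : Fb.card ≤ H.ncard := by
    rw [Set.ncard_eq_toFinset_card _ Hfin]
    exact Finset.card_filter_le _ _
  have hB : Measure.pi (fun _ : Fin N => μ) (⋃ h ∈ Fb, S h) ≤ ENNReal.ofReal δ := by
    calc Measure.pi (fun _ : Fin N => μ) (⋃ h ∈ Fb, S h)
        ≤ ∑ h ∈ Fb, Measure.pi (fun _ : Fin N => μ) (S h) := measure_biUnion_finset_le Fb S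
      _ ≤ ∑ _h ∈ Fb, ENNReal.ofReal (δ / H.ncard) := Finset.sum_le_sum hperh
      _ = (Fb.card : ℝ≥0∞) * ENNReal.ofReal (δ / H.ncard) := by
          rw [Finset.sum_const, nsmul_eq_mul]
      _ ≤ (H.ncard : ℝ≥0∞) * ENNReal.ofReal (δ / H.ncard) := by
          apply mul_le_mul_left
          exact_mod_cast hcard
      _ = ENNReal.ofReal δ := by
          rw [← ENNReal.ofReal_natCast H.ncard, ← ENNReal.ofReal_mul (by positivity)]
          congr 1
          field_simp
  have hBmeas : MeasurableSet (⋃ h ∈ Fb, S h) := Finset.measurableSet_biUnion Fb hSmeas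
  -- the complement of the bad event is contained in the target event
  have hsub : (⋃ h ∈ Fb, S h)ᶜ ⊆
      {ω | (∑ a : Fin K, ∫ x, (∫ y, (hhat ω (x, y) a - hstar (x, y) a) ^ 2 ∂(κ (x, a))) ∂ν) ≤
        32 * K * Real.log (H.ncard / δ) / N} := by
    intro ω hω
    obtain ⟨hhH, herm⟩ := hERM ω
    obtain ⟨hhm, hhs⟩ := Hprop _ hhH
    -- empirical excess risk is nonpositive
    have hemp : ∑ i, ZZ (hhat ω) hstar (ω i) ≤ 0 := by
      have h1 := herm hstar hstarH
      have h2 : ∑ i, ZZ (hhat ω) hstar (ω i)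
          = (∑ i : Fin N, ∑ k : Fin K,
              (hhat ω ((ω i).1.1, (ω i).2) k - if (ω i).1.2 = k then (1:ℝ) else 0) ^ 2)
            - ∑ i : Fin N, ∑ k : Fin K,
              (hstar ((ω i).1.1, (ω i).2) k - if (ω i).1.2 = k then (1:ℝ) else 0) ^ 2 := by
        rw [← Finset.sum_sub_distrib]
        rfl
      rw [h2]
      linarith
    -- hence the estimator is not in the bad family
    have hnotbad : ¬ (τ < ∫ z, ZZ (hhat ω) hstar z ∂μ) := by
      intro hlt
      have hmem : hhat ω ∈ Fb :=
        Finset.mem_filter.2 ⟨Hfin.mem_toFinset.2 hhH, hlt⟩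
      have : ω ∈ ⋃ h ∈ Fb, S h := Set.mem_biUnion hmem hemp
      exact hω this
    have hEZle : ∫ z, ZZ (hhat ω) hstar z ∂μ ≤ τ := le_of_not_gt hnotbad
    -- population bound
    show (∑ a : Fin K, ∫ x, (∫ y, (hhat ω (x, y) a - hstar (x, y) a) ^ 2 ∂(κ (x, a))) ∂ν) ≤
      32 * K * Real.log (H.ncard / δ) / N
    have hchain := sum_int_le hK ν κ hhm hsm hhs hss (g := hstar)
    have hD2Z : ∫ z, D2 (hhat ω) hstar z ∂μ = ∫ z, ZZ (hhat ω) hstar z ∂μ :=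
      (EZ_eq_D2 μ hhm hsm hhs hss hcond).symm
    calc (∑ a : Fin K, ∫ x, (∫ y, (hhat ω (x, y) a - hstar (x, y) a) ^ 2 ∂(κ (x, a))) ∂ν)
        ≤ (K : ℝ) * ∫ z, D2 (hhat ω) hstar z ∂μ := hchain
      _ = (K : ℝ) * ∫ z, ZZ (hhat ω) hstar z ∂μ := by rw [hD2Z]
      _ ≤ (K : ℝ) * τ := by
          apply mul_le_mul_of_nonneg_left hEZle
          positivity
      _ = 32 * K * Real.log (H.ncard / δ) / N := by
          rw [hτdef, hrdef]
          ring
  -- conclude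
  calc ENNReal.ofReal (1 - δ) = 1 - ENNReal.ofReal δ := by
        rw [ENNReal.ofReal_sub _ hδ0.le, ENNReal.ofReal_one]
    _ ≤ 1 - Measure.pi (fun _ : Fin N => μ) (⋃ h ∈ Fb, S h) := tsub_le_tsub_left hB 1
    _ = Measure.pi (fun _ : Fin N => μ) ((⋃ h ∈ Fb, S h)ᶜ) :=
        (prob_compl_eq_one_sub hBmeas).symm
    _ ≤ _ := measure_mono hsub
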